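/- Local recovery of the power-law kernel as the horizon vanishes: let α ∈ (0,1), x ∈ ℝ, and let ψ : ℝ → ℝ be continuous at x (and integrable near x). Then lim_{l → 0⁺} (1−α) · l^{α−1} · ∫_{x−l}^{x} (x−s)^{−α} ψ(s) ds = ψ(x); equivalently, with the frame-invariant normalization c⁻ = (1/2) Γ(2−α) l^{α−1}, the normalized left-handed power-law average 2 c⁻ ∫_{x−l}^{x} (x−s)^{−α} ψ(s)/Γ(1−α) ds tends to ψ(x) as l → 0⁺. -/

import Mathlib

open MeasureTheory intervalIntegral Filter Topology Set

lemma kernel_intervalIntegrable (α x l : ℝ) (hα : α ∈ Set.Ioo (0 : ℝ) 1) :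
    IntervalIntegrable (fun s => (x - s) ^ (-α)) volume (x - l) x := by
  have h0 : IntervalIntegrable (fun u : ℝ => u ^ (-α)) volume 0 l :=
    intervalIntegrable_rpow' (by linarith [hα.2])
  simpa using (h0.comp_sub_left x).symm

lemma kernel_integrableOn (α x l : ℝ) (hα : α ∈ Set.Ioo (0 : ℝ) 1) (hl : 0 < l) :
    IntegrableOn (fun s => (x - s) ^ (-α)) (Ioc (x - l) x) := by
  have h := kernel_intervalIntegrable α x l hα
  rwa [intervalIntegrable_iff_integrableOn_Ioc_of_le (by linarith : x - l ≤ x)] at h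

lemma kernel_integral (α x l : ℝ) (hα : α ∈ Set.Ioo (0 : ℝ) 1) (hl : 0 < l) :
    ∫ s in Ioc (x - l) x, (x - s) ^ (-α) = l ^ (1 - α) / (1 - α) := by
  have hle : x - l ≤ x := by linarith
  rw [← intervalIntegral.integral_of_le hle]
  have h1 : (∫ s in (x - l)..x, (x - s) ^ (-α)) = ∫ u in (x - x)..(x - (x - l)), u ^ (-α) :=
    intervalIntegral.integral_comp_sub_left (fun u : ℝ => u ^ (-α)) x
  rw [h1]
  have h2 : (∫ u in (0:ℝ)..l, u ^ (-α)) = (l ^ (-α + 1) - (0:ℝ) ^ (-α + 1)) / (-α + 1) :=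
    integral_rpow (Or.inl (by linarith [hα.2]))
  have h0 : (0:ℝ) ^ (-α + 1) = 0 := Real.zero_rpow (by linarith [hα.2])
  have : x - x = 0 := by ring
  rw [this]
  have : x - (x - l) = l := by ring
  rw [this, h2, h0]
  ring_nf

/-- local recovery of the power-law kernel as the horizon vanishes:
for `ψ` continuous at `x` and integrable near `x`,
`(1−α) l^{α−1} ∫_{x−l}^{x} (x−s)^{−α} ψ(s) ds → ψ(x)` as `l → 0⁺`; equivalently, with
the frame-invariant multiplier `c⁻ = (1/2) Γ(2−α) l^{α−1}`, the normalized left-handed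
power-law average `2 c⁻ ∫_{x−l}^{x} (x−s)^{−α} ψ(s)/Γ(1−α) ds` tends to `ψ(x)`. -/
theorem stmt_15 (α x : ℝ) (hα : α ∈ Set.Ioo (0 : ℝ) 1) (ψ : ℝ → ℝ)
    (hψ : ContinuousAt ψ x) (hint : ∃ ε > 0, IntegrableOn ψ (Set.Ioc (x - ε) x)) :
    Tendsto
      (fun l : ℝ => (1 - α) * l ^ (α - 1) * ∫ s in (x - l)..x, (x - s) ^ (-α) * ψ s)
      (𝓝[>] 0) (𝓝 (ψ x)) ∧
    Tendsto
      (fun l : ℝ => 2 * ((1 / 2) * Real.Gamma (2 - α) * l ^ (α - 1)) *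
        ∫ s in (x - l)..x, (x - s) ^ (-α) * ψ s / Real.Gamma (1 - α))
      (𝓝[>] 0) (𝓝 (ψ x)) := by
  obtain ⟨ε₀, hε₀, hintε⟩ := hint
  have hα1 : (0:ℝ) < 1 - α := by linarith [hα.2]
  -- first limit
  have hmain : Tendsto
      (fun l : ℝ => (1 - α) * l ^ (α - 1) * ∫ s in (x - l)..x, (x - s) ^ (-α) * ψ s)
      (𝓝[>] 0) (𝓝 (ψ x)) := by
    rw [Metric.tendsto_nhdsWithin_nhds]
    intro ε hε
    obtain ⟨δ₁, hδ₁, hcont⟩ := Metric.continuousAt_iff.mp hψ (ε / 2) (by linarith)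
    refine ⟨min δ₁ ε₀, lt_min hδ₁ hε₀, fun l hl hld => ?_⟩
    have hl0 : 0 < l := hl
    have hlδ : l < δ₁ := by
      have := hld
      rw [Real.dist_eq, sub_zero, abs_of_pos hl0] at this
      exact lt_of_lt_of_le this (min_le_left _ _)
    have hlε₀ : l ≤ ε₀ := by
      have := hld
      rw [Real.dist_eq, sub_zero, abs_of_pos hl0] at this
      exact le_of_lt (lt_of_lt_of_le this (min_le_right _ _))
    have hle : x - l ≤ x := by linarith
    set κ : ℝ → ℝ := fun s => (x - s) ^ (-α) with hκ
    have hκint : IntegrableOn κ (Ioc (x - l) x) := kernel_integrableOn α x l hα hl0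
    have hκval : ∫ s in Ioc (x - l) x, κ s = l ^ (1 - α) / (1 - α) :=
      kernel_integral α x l hα hl0
    have hκnn : ∀ s ∈ Ioc (x - l) x, 0 ≤ κ s := fun s hs =>
      Real.rpow_nonneg (by linarith [hs.2]) _
    -- near-bound for ψ on Ioc (x - l) x
    have hψclose : ∀ s ∈ Ioc (x - l) x, |ψ s - ψ x| < ε / 2 := by
      intro s hs
      apply hcont
      rw [Real.dist_eq, abs_of_nonpos (by linarith [hs.2])]
      have := hs.1
      linarith
    -- measurability of ψ on the set
    have hψmeas : AEStronglyMeasurable ψ (volume.restrict (Ioc (x - l) x)) := by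
      have : Ioc (x - l) x ⊆ Ioc (x - ε₀) x := Ioc_subset_Ioc (by linarith) le_rfl
      exact (hintε.mono_set this).aestronglyMeasurable
    have hκmeas : AEStronglyMeasurable κ (volume.restrict (Ioc (x - l) x)) :=
      hκint.aestronglyMeasurable
    -- integrability of κ * ψ
    have hκψint : IntegrableOn (fun s => κ s * ψ s) (Ioc (x - l) x) := by
      apply Integrable.mono' (g := fun s => κ s * (|ψ x| + ε / 2))
        (hκint.mul_const _) (hκmeas.mul hψmeas)
      filter_upwards [ae_restrict_mem measurableSet_Ioc] with s hs
      simp only [Pi.mul_apply]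
      rw [norm_mul, Real.norm_eq_abs, Real.norm_eq_abs, abs_of_nonneg (hκnn s hs)]
      have h1 : |ψ s| ≤ |ψ x| + ε / 2 := by
        have := hψclose s hs
        have := abs_sub_abs_le_abs_sub (ψ s) (ψ x)
        linarith
      exact mul_le_mul_of_nonneg_left h1 (hκnn s hs)
    -- the key identity
    have hIoc : (∫ s in (x - l)..x, (x - s) ^ (-α) * ψ s)
        = ∫ s in Ioc (x - l) x, κ s * ψ s := intervalIntegral.integral_of_le hle
    have hlpow : l ^ (α - 1) * (l ^ (1 - α)) = 1 := by
      rw [← Real.rpow_add hl0]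
      norm_num
    have hψx : ψ x = (1 - α) * l ^ (α - 1) * ∫ s in Ioc (x - l) x, κ s * ψ x := by
      rw [MeasureTheory.integral_mul_const, hκval]
      rw [show (1 - α) * l ^ (α - 1) * (l ^ (1 - α) / (1 - α) * ψ x)
          = (l ^ (α - 1) * l ^ (1 - α)) * ((1 - α) / (1 - α)) * ψ x from by ring,
        hlpow, div_self (ne_of_gt hα1)]
      ring
    have hdiff : (1 - α) * l ^ (α - 1) * (∫ s in (x - l)..x, (x - s) ^ (-α) * ψ s) - ψ x
        = (1 - α) * l ^ (α - 1) * ∫ s in Ioc (x - l) x, κ s * (ψ s - ψ x) := by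
      rw [hIoc]
      conv_lhs => rw [hψx]
      rw [← mul_sub, ← integral_sub hκψint (hκint.mul_const _)]
      congr 1
      apply MeasureTheory.integral_congr_ae
      filter_upwards with s
      ring
    rw [Real.dist_eq, hdiff]
    have hbound : |∫ s in Ioc (x - l) x, κ s * (ψ s - ψ x)|
        ≤ ∫ s in Ioc (x - l) x, κ s * (ε / 2) := by
      rw [← Real.norm_eq_abs]
      apply MeasureTheory.norm_integral_le_of_norm_le (hκint.mul_const _)
      filter_upwards [ae_restrict_mem measurableSet_Ioc] with s hs
      rw [norm_mul, Real.norm_eq_abs, Real.norm_eq_abs, abs_of_nonneg (hκnn s hs)]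
      exact mul_le_mul_of_nonneg_left (le_of_lt (hψclose s hs)) (hκnn s hs)
    have hval : ∫ s in Ioc (x - l) x, κ s * (ε / 2)
        = (l ^ (1 - α) / (1 - α)) * (ε / 2) := by
      rw [MeasureTheory.integral_mul_const, hκval]
    have hpos : 0 < (1 - α) * l ^ (α - 1) :=
      mul_pos hα1 (Real.rpow_pos_of_pos hl0 _)
    calc |(1 - α) * l ^ (α - 1) * ∫ s in Ioc (x - l) x, κ s * (ψ s - ψ x)|
        = (1 - α) * l ^ (α - 1) * |∫ s in Ioc (x - l) x, κ s * (ψ s - ψ x)| := by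
          rw [abs_mul, abs_of_pos hpos]
      _ ≤ (1 - α) * l ^ (α - 1) * ((l ^ (1 - α) / (1 - α)) * (ε / 2)) := by
          apply mul_le_mul_of_nonneg_left _ (le_of_lt hpos)
          rw [← hval]; exact hbound
      _ = ε / 2 := by
          rw [show (1 - α) * l ^ (α - 1) * (l ^ (1 - α) / (1 - α) * (ε / 2))
              = (l ^ (α - 1) * l ^ (1 - α)) * ((1 - α) / (1 - α)) * (ε / 2) from by ring,
            hlpow, div_self (ne_of_gt hα1)]
          ring
      _ < ε := by linarith
  refine ⟨hmain, ?_⟩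
  have hΓpos : 0 < Real.Gamma (1 - α) := Real.Gamma_pos_of_pos hα1
  have hΓ : Real.Gamma (2 - α) = (1 - α) * Real.Gamma (1 - α) := by
    rw [show (2:ℝ) - α = (1 - α) + 1 by ring, Real.Gamma_add_one (ne_of_gt hα1)]
  have heq : ∀ l : ℝ,
      2 * ((1 / 2) * Real.Gamma (2 - α) * l ^ (α - 1)) *
        (∫ s in (x - l)..x, (x - s) ^ (-α) * ψ s / Real.Gamma (1 - α))
      = (1 - α) * l ^ (α - 1) * ∫ s in (x - l)..x, (x - s) ^ (-α) * ψ s := by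
    intro l
    have h1 : (∫ s in (x - l)..x, (x - s) ^ (-α) * ψ s / Real.Gamma (1 - α))
        = (∫ s in (x - l)..x, (x - s) ^ (-α) * ψ s) / Real.Gamma (1 - α) := by
      rw [← intervalIntegral.integral_div]
    rw [h1, hΓ]
    field_simp
  have : (fun l : ℝ => 2 * ((1 / 2) * Real.Gamma (2 - α) * l ^ (α - 1)) *
        ∫ s in (x - l)..x, (x - s) ^ (-α) * ψ s / Real.Gamma (1 - α))
      = (fun l : ℝ => (1 - α) * l ^ (α - 1) * ∫ s in (x - l)..x, (x - s) ^ (-α) * ψ s) := by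
    funext l; exact heq l
  rw [this]
  exact hmain
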